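/- Fix n ≥ 2, R ≥ 1, and the exponent p = 4(n-1). Let δ_1,…,δ_{n-1} ∈ (0,1] satisfy δ_1^n δ_2^{n-1}⋯δ_{n-1}^2 = R^{-1}. Let p_k := k^2+k-2 and let m be the largest integer with p_{n+1-m} ≥ p. Then (∏_{j=1}^{m} δ_j^{-1})^{(1/2 - 2/p)p} · (∏_{k=m+1}^{n-1} δ_k^{-1})^{p - p_{n-m}} · ∏_{j=m+1}^{n-2} [ (δ_j^{-1})^{(1/2 - 2/p_{n+1-j}) p_{n+1-j}} · (∏_{k=j+1}^{n-1} δ_k^{-1})^{p_{n+1-j} - p_{n-j}} ] ≤ ∏_{j=1}^{n-1} δ_j^{-2n-2j+6}. -/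

import Mathlib

set_option maxHeartbeats 1000000


/-- The key exponent verification in the proof of the sharp `L^{4(n-1)}` local smoothing
estimate: with `p = 4(n-1)`, `p_k = k^2+k-2`, `m` the largest integer with
`p_{n+1-m} ≥ p`, and `δ_1^n δ_2^{n-1} ⋯ δ_{n-1}^2 = R⁻¹`, `δ_i ∈ (0,1]`, one has
`(∏_{j≤m} δ_j⁻¹)^{(1/2-2/p)p} (∏_{k>m} δ_k⁻¹)^{p-p_{n-m}}
  ∏_{j=m+1}^{n-2} [(δ_j⁻¹)^{(1/2-2/p_{n+1-j})p_{n+1-j}} (∏_{k>j} δ_k⁻¹)^{p_{n+1-j}-p_{n-j}}]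
  ≤ ∏_{j=1}^{n-1} δ_j^{-2n-2j+6}`. -/
theorem stmt_13 (n m : ℕ) (hn : 2 ≤ n) (R : ℝ) (hR : 1 ≤ R)
    (δ : ℕ → ℝ) (hδ : ∀ i ∈ Finset.Icc 1 (n - 1), 0 < δ i ∧ δ i ≤ 1)
    (hnorm : ∏ i ∈ Finset.Icc 1 (n - 1), δ i ^ (n + 1 - i) = R⁻¹)
    (pf : ℕ → ℝ) (hpf : ∀ k : ℕ, pf k = (k : ℝ) ^ 2 + (k : ℝ) - 2)
    (hm1 : 4 * ((n : ℝ) - 1) ≤ pf (n + 1 - m))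
    (hm2 : ∀ m' : ℕ, 4 * ((n : ℝ) - 1) ≤ pf (n + 1 - m') → m' ≤ m) :
    (∏ j ∈ Finset.Icc 1 m, (δ j)⁻¹) ^ ((1 / 2 - 2 / (4 * ((n : ℝ) - 1))) * (4 * ((n : ℝ) - 1)))
      * (∏ k ∈ Finset.Icc (m + 1) (n - 1), (δ k)⁻¹) ^ (4 * ((n : ℝ) - 1) - pf (n - m))
      * ∏ j ∈ Finset.Icc (m + 1) (n - 2),
          (((δ j)⁻¹) ^ ((1 / 2 - 2 / pf (n + 1 - j)) * pf (n + 1 - j))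
            * (∏ k ∈ Finset.Icc (j + 1) (n - 1), (δ k)⁻¹) ^ (pf (n + 1 - j) - pf (n - j)))
    ≤ ∏ j ∈ Finset.Icc 1 (n - 1), ((δ j)⁻¹) ^ (2 * (n : ℝ) + 2 * (j : ℝ) - 6) := by
  have hn1 : (2:ℝ) ≤ (n:ℝ) := by exact_mod_cast hn
  -- m ≤ n - 1
  have hmn : m ≤ n - 1 := by
    by_contra h
    have h2 : n + 1 - m = 0 ∨ n + 1 - m = 1 := by omega
    rcases h2 with h2 | h2 <;> rw [h2, hpf] at hm1 <;> push_cast at hm1 <;> linarith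
  have hδpos : ∀ j, 1 ≤ j → j ≤ n - 1 → 0 < (δ j)⁻¹ := fun j h1 h2 =>
    inv_pos.mpr (hδ j (Finset.mem_Icc.mpr ⟨h1, h2⟩)).1
  have ht0 : ∀ j, 1 ≤ j → j ≤ n - 1 → 0 ≤ Real.log ((δ j)⁻¹) := by
    intro j h1 h2
    have h := hδ j (Finset.mem_Icc.mpr ⟨h1, h2⟩)
    exact Real.log_nonneg (one_le_inv_iff₀.mpr ⟨h.1, h.2⟩)
  have hpfpos : ∀ k : ℕ, 2 ≤ k → (0:ℝ) < pf k := by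
    intro k hk
    rw [hpf]
    have : (2:ℝ) ≤ (k:ℝ) := by exact_mod_cast hk
    nlinarith
  -- positivity of pieces
  have hP1 : (0:ℝ) < ∏ j ∈ Finset.Icc 1 m, (δ j)⁻¹ :=
    Finset.prod_pos fun j hj => by
      obtain ⟨h1, h2⟩ := Finset.mem_Icc.mp hj
      exact hδpos j h1 (h2.trans hmn)
  have hP2 : (0:ℝ) < ∏ k ∈ Finset.Icc (m+1) (n-1), (δ k)⁻¹ :=
    Finset.prod_pos fun j hj => by
      obtain ⟨h1, h2⟩ := Finset.mem_Icc.mp hj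
      exact hδpos j (by omega) h2
  have hInner : ∀ j : ℕ, (0:ℝ) < ∏ k ∈ Finset.Icc (j+1) (n-1), (δ k)⁻¹ := fun j =>
    Finset.prod_pos fun k hk => by
      obtain ⟨h1, h2⟩ := Finset.mem_Icc.mp hk
      exact hδpos k (by omega) h2
  have hbig : (0:ℝ) < ∏ j ∈ Finset.Icc (m+1) (n-2),
      (((δ j)⁻¹) ^ ((1 / 2 - 2 / pf (n + 1 - j)) * pf (n + 1 - j))
        * (∏ k ∈ Finset.Icc (j + 1) (n - 1), (δ k)⁻¹) ^ (pf (n + 1 - j) - pf (n - j))) :=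
    Finset.prod_pos fun j hj => by
      obtain ⟨h1, h2⟩ := Finset.mem_Icc.mp hj
      exact mul_pos (Real.rpow_pos_of_pos (hδpos j (by omega) (by omega)) _)
        (Real.rpow_pos_of_pos (hInner j) _)
  have hRHSpos : (0:ℝ) < ∏ j ∈ Finset.Icc 1 (n-1), ((δ j)⁻¹) ^ (2*(n:ℝ)+2*(j:ℝ)-6) :=
    Finset.prod_pos fun j hj => by
      obtain ⟨h1, h2⟩ := Finset.mem_Icc.mp hj
      exact Real.rpow_pos_of_pos (hδpos j h1 h2) _
  -- reduce to logarithms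
  rw [← Real.log_le_log_iff
    (mul_pos (mul_pos (Real.rpow_pos_of_pos hP1 _) (Real.rpow_pos_of_pos hP2 _)) hbig) hRHSpos]
  rw [Real.log_mul (mul_pos (Real.rpow_pos_of_pos hP1 _) (Real.rpow_pos_of_pos hP2 _)).ne' hbig.ne',
    Real.log_mul (Real.rpow_pos_of_pos hP1 _).ne' (Real.rpow_pos_of_pos hP2 _).ne',
    Real.log_rpow hP1, Real.log_rpow hP2,
    Real.log_prod (fun j hj => by
      obtain ⟨h1, h2⟩ := Finset.mem_Icc.mp hj
      exact (hδpos j h1 (h2.trans hmn)).ne'),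
    Real.log_prod (fun j hj => by
      obtain ⟨h1, h2⟩ := Finset.mem_Icc.mp hj
      exact (hδpos j (by omega) h2).ne'),
    Real.log_prod (fun j hj => by
      obtain ⟨h1, h2⟩ := Finset.mem_Icc.mp hj
      exact (mul_pos (Real.rpow_pos_of_pos (hδpos j (by omega) (by omega)) _)
        (Real.rpow_pos_of_pos (hInner j) _)).ne'),
    Real.log_prod (fun j hj => by
      obtain ⟨h1, h2⟩ := Finset.mem_Icc.mp hj
      exact (Real.rpow_pos_of_pos (hδpos j h1 h2) _).ne')]
  -- simplify the logs of the middle factors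
  have hbiglog : ∑ j ∈ Finset.Icc (m+1) (n-2),
      Real.log (((δ j)⁻¹) ^ ((1 / 2 - 2 / pf (n + 1 - j)) * pf (n + 1 - j))
        * (∏ k ∈ Finset.Icc (j + 1) (n - 1), (δ k)⁻¹) ^ (pf (n + 1 - j) - pf (n - j)))
      = ∑ j ∈ Finset.Icc (m+1) (n-2),
        ((pf (n + 1 - j) / 2 - 2) * Real.log ((δ j)⁻¹)
          + (pf (n + 1 - j) - pf (n - j)) * ∑ k ∈ Finset.Icc (j + 1) (n - 1), Real.log ((δ k)⁻¹)) := by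
    refine Finset.sum_congr rfl fun j hj => ?_
    obtain ⟨h1, h2⟩ := Finset.mem_Icc.mp hj
    have hx := hδpos j (by omega) (by omega)
    have hpfne : pf (n + 1 - j) ≠ 0 := (hpfpos _ (by omega)).ne'
    rw [Real.log_mul (Real.rpow_pos_of_pos hx _).ne' (Real.rpow_pos_of_pos (hInner j) _).ne',
      Real.log_rpow hx, Real.log_rpow (hInner j),
      Real.log_prod (fun k hk => by
        obtain ⟨hk1, hk2⟩ := Finset.mem_Icc.mp hk
        exact (hδpos k (by omega) hk2).ne')]
    have hc : (1 / 2 - 2 / pf (n + 1 - j)) * pf (n + 1 - j) = pf (n + 1 - j) / 2 - 2 := by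
      field_simp
    rw [hc]
  rw [hbiglog]
  -- simplify the log of the RHS
  have hRlog : ∑ j ∈ Finset.Icc 1 (n-1), Real.log (((δ j)⁻¹) ^ (2*(n:ℝ)+2*(j:ℝ)-6))
      = ∑ j ∈ Finset.Icc 1 (n-1), (2*(n:ℝ)+2*(j:ℝ)-6) * Real.log ((δ j)⁻¹) := by
    refine Finset.sum_congr rfl fun j hj => ?_
    obtain ⟨h1, h2⟩ := Finset.mem_Icc.mp hj
    exact Real.log_rpow (hδpos j h1 h2) _
  rw [hRlog]
  -- the key telescoping induction
  have key : ∀ d a : ℕ, a + d + 1 = n →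
      (4*((n:ℝ)-1) - pf (n - a)) * (∑ k ∈ Finset.Icc (a+1) (n-1), Real.log ((δ k)⁻¹))
      + ∑ j ∈ Finset.Icc (a+1) (n-2),
          ((pf (n+1-j)/2 - 2) * Real.log ((δ j)⁻¹)
            + (pf (n+1-j) - pf (n-j)) * ∑ k ∈ Finset.Icc (j+1) (n-1), Real.log ((δ k)⁻¹))
      ≤ ∑ j ∈ Finset.Icc (a+1) (n-1), (2*(n:ℝ) + 2*(j:ℝ) - 6) * Real.log ((δ j)⁻¹) := by
    intro d
    induction d with
    | zero =>
      intro a ha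
      have e1 : Finset.Icc (a+1) (n-1) = ∅ := Finset.Icc_eq_empty (by omega)
      have e2 : Finset.Icc (a+1) (n-2) = ∅ := Finset.Icc_eq_empty (by omega)
      rw [e1, e2]
      simp
    | succ d ih =>
      intro a ha
      by_cases hd : d = 0
      · -- a = n - 2 : single term, equality of exponents
        subst hd
        have e1 : Finset.Icc (a+1) (n-1) = {a+1} := by
          rw [show n - 1 = a + 1 by omega, Finset.Icc_self]
        have e2 : Finset.Icc (a+1) (n-2) = ∅ := Finset.Icc_eq_empty (by omega)
        rw [e1, e2]
        simp only [Finset.sum_singleton, Finset.sum_empty, add_zero]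
        rw [show n - a = 2 by omega, hpf]
        have haR : (a:ℝ) + 2 = (n:ℝ) := by exact_mod_cast congrArg (Nat.cast (R := ℝ)) (by omega : a + 2 = n)
        have hL : 0 ≤ Real.log ((δ (a+1))⁻¹) := ht0 (a+1) (by omega) (by omega)
        push_cast
        nlinarith [hL, haR]
      · -- a + 1 ≤ n - 2 : peel off the first index
        have hsplit : ∀ c : ℕ, a + 1 ≤ c →
            Finset.Icc (a+1) c = insert (a+1) (Finset.Icc (a+1+1) c) := by
          intro c hc
          ext x
          simp only [Finset.mem_Icc, Finset.mem_insert]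
          omega
        have hnotmem : ∀ c : ℕ, a + 1 ∉ Finset.Icc (a+1+1) c := by
          intro c
          simp only [Finset.mem_Icc]
          omega
        rw [hsplit (n-1) (by omega), hsplit (n-2) (by omega),
          Finset.sum_insert (hnotmem _), Finset.sum_insert (hnotmem _),
          Finset.sum_insert (hnotmem _)]
        have hih := ih (a+1) (by omega)
        have hL : 0 ≤ Real.log ((δ (a+1))⁻¹) := ht0 (a+1) (by omega) (by omega)
        have hcoeff : 4*((n:ℝ)-1) - pf (n-a)/2 - 2 ≤ 2*(n:ℝ) + 2*((a:ℝ)+1) - 6 := by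
          rw [hpf]
          have hK : ((n - a : ℕ) : ℝ) = (n:ℝ) - (a:ℝ) := by
            rw [Nat.cast_sub (by omega)]
          have hK2 : (2:ℝ) ≤ (n:ℝ) - (a:ℝ) := by
            rw [← hK]; exact_mod_cast (by omega : 2 ≤ n - a)
          rw [hK]
          nlinarith [hK2, sq_nonneg ((n:ℝ) - (a:ℝ) - 2)]
        have step := mul_le_mul_of_nonneg_right hcoeff hL
        rw [show n + 1 - (a+1) = n - a by omega]
        push_cast
        linarith [step, hih]
  -- assemble
  have hc1 : (1 / 2 - 2 / (4 * ((n:ℝ) - 1))) * (4 * ((n:ℝ) - 1)) = 2*(n:ℝ) - 4 := by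
    have h4 : (4:ℝ) * ((n:ℝ) - 1) ≠ 0 := by nlinarith
    rw [sub_mul, div_mul_cancel₀ _ h4]
    ring
  have h1 : (1 / 2 - 2 / (4 * ((n:ℝ) - 1))) * (4 * ((n:ℝ) - 1))
        * ∑ j ∈ Finset.Icc 1 m, Real.log ((δ j)⁻¹)
      ≤ ∑ j ∈ Finset.Icc 1 m, (2*(n:ℝ) + 2*(j:ℝ) - 6) * Real.log ((δ j)⁻¹) := by
    rw [hc1, Finset.mul_sum]
    refine Finset.sum_le_sum fun j hj => ?_
    obtain ⟨hj1, hj2⟩ := Finset.mem_Icc.mp hj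
    have hL := ht0 j hj1 (hj2.trans hmn)
    have hj1' : (1:ℝ) ≤ (j:ℝ) := by exact_mod_cast hj1
    nlinarith [hL, hj1']
  have h2 := key (n - m - 1) m (by omega)
  have hsum : (∑ j ∈ Finset.Icc 1 m, (2*(n:ℝ) + 2*(j:ℝ) - 6) * Real.log ((δ j)⁻¹))
      + ∑ j ∈ Finset.Icc (m+1) (n-1), (2*(n:ℝ) + 2*(j:ℝ) - 6) * Real.log ((δ j)⁻¹)
      = ∑ j ∈ Finset.Icc 1 (n-1), (2*(n:ℝ) + 2*(j:ℝ) - 6) * Real.log ((δ j)⁻¹) := by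
    rw [show Finset.Icc 1 m = Finset.Ioc 0 m from Finset.ext fun x => by
        simp only [Finset.mem_Icc, Finset.mem_Ioc]; omega,
      show Finset.Icc (m+1) (n-1) = Finset.Ioc m (n-1) from Finset.ext fun x => by
        simp only [Finset.mem_Icc, Finset.mem_Ioc]; omega,
      show Finset.Icc 1 (n-1) = Finset.Ioc 0 (n-1) from Finset.ext fun x => by
        simp only [Finset.mem_Icc, Finset.mem_Ioc]; omega]
    exact Finset.sum_Ioc_consecutive _ (Nat.zero_le m) hmn
  linarith [h1, h2, hsum]
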